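/- Let CP_{(2,0)}(n) denote the generating function (in q) for cylindric partitions with profile (2,0) in which each row has at most n parts. Then CP_{(2,0)}(n) = (-q^2;q^2)_{n-1} / (q;q)_{2n} for n ≥ 1. -/

import Mathlib

open PowerSeries Finset

namespace Stmt4Aux

/-! ### Generic "swap at violations" machinery -/

def tauP (V : ℕ → Prop) [DecidablePred V] (p : ℕ) : ℕ :=
  if p % 2 = 1 ∧ V (p / 2) then p + 1
  else if p % 2 = 0 ∧ 1 ≤ p ∧ V (p / 2 - 1) then p - 1 else p

def dropP (V : ℕ → Prop) [DecidablePred V] (t : ℕ) : ℕ :=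
  if t % 2 = 1 ∧ V (t / 2) then 1 else 0

def mP (n : ℕ) (V : ℕ → Prop) [DecidablePred V] (p : ℕ) : ℕ :=
  ∑ i ∈ range (n - 1), if V i ∧ p < 2 * i + 2 then 1 else 0

section TauP

variable {V W : ℕ → Prop} [DecidablePred V] [DecidablePred W]

lemma tauP_even (i : ℕ) :
    tauP V (2 * i) = if 1 ≤ i ∧ V (i - 1) then 2 * i - 1 else 2 * i := by
  have h2 : 2 * i / 2 = i := by omega
  simp only [tauP, h2]
  rw [if_neg (fun h => absurd h.1 (by omega))]
  by_cases hV : V (i - 1)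
  · by_cases hi : 1 ≤ i
    · rw [if_pos ⟨by omega, by omega, hV⟩, if_pos ⟨hi, hV⟩]
    · rw [if_neg (fun h => absurd h.2.1 (by omega)), if_neg (fun h => absurd h.1 hi)]
  · rw [if_neg (fun h => hV h.2.2), if_neg (fun h => hV h.2)]

lemma tauP_odd (i : ℕ) :
    tauP V (2 * i + 1) = if V i then 2 * i + 2 else 2 * i + 1 := by
  have h2 : (2 * i + 1) / 2 = i := by omega
  simp only [tauP, h2]
  by_cases hV : V i
  · rw [if_pos ⟨by omega, hV⟩, if_pos hV]
  · rw [if_neg (fun h => hV h.2), if_neg (fun h => absurd h.1 (by omega)), if_neg hV]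

lemma dropP_even (i : ℕ) : dropP V (2 * i) = 0 := by
  rw [dropP, if_neg (fun h => absurd h.1 (by omega))]

lemma dropP_odd (i : ℕ) : dropP V (2 * i + 1) = if V i then 1 else 0 := by
  have h2 : (2 * i + 1) / 2 = i := by omega
  simp only [dropP, h2]
  by_cases hV : V i
  · rw [if_pos ⟨by omega, hV⟩, if_pos hV]
  · rw [if_neg (fun h => hV h.2), if_neg hV]

lemma parity_cases (p : ℕ) : (∃ i, p = 2 * i) ∨ (∃ i, p = 2 * i + 1) := by
  rcases Nat.even_or_odd p with ⟨i, hi⟩ | ⟨i, hi⟩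
  · exact Or.inl ⟨i, by omega⟩
  · exact Or.inr ⟨i, by omega⟩

lemma tauP_invol (p : ℕ) : tauP V (tauP V p) = p := by
  rcases parity_cases p with ⟨i, rfl⟩ | ⟨i, rfl⟩
  · rw [tauP_even]
    split_ifs with h
    · rw [show 2 * i - 1 = 2 * (i - 1) + 1 by omega, tauP_odd, if_pos h.2]
      omega
    · rw [tauP_even, if_neg h]
  · rw [tauP_odd]
    split_ifs with h
    · rw [show 2 * i + 2 = 2 * (i + 1) by omega, tauP_even,
        if_pos ⟨by omega, by simpa using h⟩]
      omega
    · rw [tauP_odd, if_neg h]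

lemma tauP_lt {M : ℕ} (hV : ∀ i, V i → 2 * i + 2 < M) (p : ℕ) (hp : p < M) :
    tauP V p < M := by
  rcases parity_cases p with ⟨i, rfl⟩ | ⟨i, rfl⟩
  · rw [tauP_even]; split_ifs <;> omega
  · rw [tauP_odd]
    split_ifs with h
    · exact hV i h
    · exact hp

lemma mP_succ (n : ℕ) (hV : ∀ i, V i → i < n - 1) (p : ℕ) :
    mP n V p = mP n V (p + 1) + dropP V p := by
  simp only [mP]
  have key : ∀ i ∈ range (n - 1),
      (if V i ∧ p < 2 * i + 2 then 1 else 0)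
        = ((if V i ∧ p + 1 < 2 * i + 2 then 1 else 0) : ℕ)
          + (if V i ∧ p + 1 = 2 * i + 2 then 1 else 0) := by
    intro i _
    by_cases hv : V i
    · simp only [hv, true_and]; split_ifs <;> omega
    · simp [hv]
  rw [Finset.sum_congr rfl key, Finset.sum_add_distrib]
  congr 1
  by_cases hp : p % 2 = 1 ∧ V (p / 2)
  · rw [dropP, if_pos hp]
    have e : ∀ i ∈ range (n - 1),
        (if V i ∧ p + 1 = 2 * i + 2 then 1 else 0)
          = if i = p / 2 then (1 : ℕ) else 0 := by
      intro i _
      refine if_congr ⟨fun h => by omega, fun h => ?_⟩ rfl rfl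
      subst h
      exact ⟨hp.2, by omega⟩
    rw [Finset.sum_congr rfl e, Finset.sum_ite_eq' (range (n - 1)) (p / 2) (fun _ => 1),
      if_pos (Finset.mem_range.2 (hV _ hp.2))]
  · rw [dropP, if_neg hp, Finset.sum_eq_zero]
    intro i _
    rw [if_neg]
    rintro ⟨hv, he⟩
    exact hp ⟨by omega, by rwa [show p / 2 = i by omega]⟩

lemma mP_zero (n : ℕ) {p : ℕ} (hp : 2 * n ≤ p) : mP n V p = 0 := by
  refine Finset.sum_eq_zero fun i hi => if_neg ?_
  rw [Finset.mem_range] at hi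
  rintro ⟨-, h2⟩
  omega

lemma tauP_congr (h : ∀ i, V i ↔ W i) (p : ℕ) : tauP V p = tauP W p := by
  simp only [tauP]
  exact if_congr (and_congr Iff.rfl (h _)) rfl
    (if_congr (and_congr Iff.rfl (and_congr Iff.rfl (h _))) rfl rfl)

lemma dropP_congr (h : ∀ i, V i ↔ W i) (t : ℕ) : dropP V t = dropP W t := by
  simp only [dropP]
  exact if_congr (and_congr Iff.rfl (h _)) rfl rfl

lemma mP_congr (n : ℕ) (h : ∀ i, V i ↔ W i) (p : ℕ) : mP n V p = mP n W p :=
  Finset.sum_congr rfl fun i _ => if_congr (and_congr (h _) Iff.rfl) rfl rfl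

end TauP


/-! ### The backward map -/

abbrev VB (n : ℕ) (l : ℕ →₀ ℕ) : ℕ → Prop := fun i => i < n - 1 ∧ l i ≠ 0

def muB (n : ℕ) (l : ℕ →₀ ℕ) (p : ℕ) : ℕ :=
  ∑ t ∈ range (2 * n), if p ≤ t then l (n - 1 + t) / (t + 1) else 0

def dB (n : ℕ) (l : ℕ →₀ ℕ) (p : ℕ) : ℕ := muB n l p + mP n (VB n l) p

def AB (n : ℕ) (l : ℕ →₀ ℕ) : (ℕ → ℕ) × (ℕ → ℕ) :=
  (fun i => dB n l (tauP (VB n l) (2 * i)), fun i => dB n l (tauP (VB n l) (2 * i + 1)))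

variable (n : ℕ) (l : ℕ →₀ ℕ)

lemma muB_succ (p : ℕ) :
    muB n l p = (if p < 2 * n then l (n - 1 + p) / (p + 1) else 0) + muB n l (p + 1) := by
  simp only [muB]
  have key : ∀ t ∈ range (2 * n),
      (if p ≤ t then l (n - 1 + t) / (t + 1) else 0)
        = ((if t = p then l (n - 1 + t) / (t + 1) else 0) : ℕ)
          + (if p + 1 ≤ t then l (n - 1 + t) / (t + 1) else 0) := by
    intro t _
    set X := l (n - 1 + t) / (t + 1) with hX
    split_ifs <;> omega
  rw [Finset.sum_congr rfl key, Finset.sum_add_distrib,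
    Finset.sum_ite_eq' (range (2 * n)) p (fun t => l (n - 1 + t) / (t + 1))]
  simp only [Finset.mem_range]

lemma muB_zero {p : ℕ} (hp : 2 * n ≤ p) : muB n l p = 0 := by
  refine Finset.sum_eq_zero fun t ht => if_neg ?_
  rw [Finset.mem_range] at ht
  omega

lemma dB_step (p : ℕ) : dB n l (p + 1) + dropP (VB n l) p ≤ dB n l p := by
  have h1 := muB_succ n l p
  have h2 := mP_succ (V := VB n l) n (fun i hi => hi.1) p
  simp only [dB]
  set q := if p < 2 * n then l (n - 1 + p) / (p + 1) else 0 with hq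
  omega

lemma dB_anti {p q : ℕ} (h : p ≤ q) : dB n l q ≤ dB n l p := by
  induction q, h using Nat.le_induction with
  | base => exact le_rfl
  | succ q hq ih => exact le_trans (by have := dB_step n l q; omega) ih

lemma dB_zero {p : ℕ} (hp : 2 * n ≤ p) : dB n l p = 0 := by
  rw [dB, muB_zero n l hp, mP_zero n hp]

lemma AB_a_anti (i : ℕ) : (AB n l).1 (i + 1) ≤ (AB n l).1 i := by
  show dB n l (tauP (VB n l) (2 * (i + 1))) ≤ dB n l (tauP (VB n l) (2 * i))
  rw [tauP_even, tauP_even]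
  split_ifs <;> (apply dB_anti; omega)

lemma AB_b_anti (i : ℕ) : (AB n l).2 (i + 1) ≤ (AB n l).2 i := by
  show dB n l (tauP (VB n l) (2 * (i + 1) + 1)) ≤ dB n l (tauP (VB n l) (2 * i + 1))
  rw [tauP_odd, tauP_odd]
  split_ifs <;> (apply dB_anti; omega)

lemma AB_ba (i : ℕ) : (AB n l).2 i ≤ (AB n l).1 i := by
  show dB n l (tauP (VB n l) (2 * i + 1)) ≤ dB n l (tauP (VB n l) (2 * i))
  rw [tauP_odd, tauP_even]
  split_ifs <;> (apply dB_anti; omega)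

lemma AB_ab (i : ℕ) : (AB n l).1 (i + 2) ≤ (AB n l).2 i := by
  show dB n l (tauP (VB n l) (2 * (i + 2))) ≤ dB n l (tauP (VB n l) (2 * i + 1))
  rw [tauP_odd, tauP_even]
  split_ifs <;> (apply dB_anti; omega)

lemma AB_a_supp (i : ℕ) (hi : n ≤ i) : (AB n l).1 i = 0 := by
  show dB n l (tauP (VB n l) (2 * i)) = 0
  rw [tauP_even, if_neg (fun h => by have := h.2.1; omega)]
  exact dB_zero n l (by omega)

lemma AB_b_supp (i : ℕ) (hi : n ≤ i) : (AB n l).2 i = 0 := by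
  show dB n l (tauP (VB n l) (2 * i + 1)) = 0
  rw [tauP_odd, if_neg (fun h => by have := h.1; omega)]
  exact dB_zero n l (by omega)

lemma sum_range_even (g : ℕ → ℕ) (m : ℕ) :
    ∑ p ∈ range (2 * m), g p = ∑ i ∈ range m, (g (2 * i) + g (2 * i + 1)) := by
  induction m with
  | zero => simp
  | succ m ih =>
    rw [show 2 * (m + 1) = 2 * m + 1 + 1 by ring, Finset.sum_range_succ,
      Finset.sum_range_succ, Finset.sum_range_succ, ih]
    omega

lemma sum_AB (h1 : ∀ i, i < n - 1 → l i = 0 ∨ l i = 2 * i + 2)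
    (h2 : ∀ t, t < 2 * n → (t + 1) ∣ l (n - 1 + t)) :
    ∑ i ∈ range n, ((AB n l).1 i + (AB n l).2 i) = ∑ i ∈ range ((n - 1) + 2 * n), l i := by
  have e1 : ∑ i ∈ range n, ((AB n l).1 i + (AB n l).2 i)
      = ∑ p ∈ range (2 * n), dB n l (tauP (VB n l) p) :=
    (sum_range_even (fun p => dB n l (tauP (VB n l) p)) n).symm
  rw [e1]
  have e2 : ∑ p ∈ range (2 * n), dB n l (tauP (VB n l) p)
      = ∑ p ∈ range (2 * n), dB n l p := by
    refine Finset.sum_nbij' (tauP (VB n l)) (tauP (VB n l)) ?_ ?_ ?_ ?_ ?_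
    · intro a ha
      rw [Finset.mem_range] at *
      exact tauP_lt (fun i hi => by have := hi.1; omega) a ha
    · intro a ha
      rw [Finset.mem_range] at *
      exact tauP_lt (fun i hi => by have := hi.1; omega) a ha
    · intro a _; exact tauP_invol a
    · intro a _; exact tauP_invol a
    · intro a _; rfl
  rw [e2]
  have e3 : ∑ p ∈ range (2 * n), dB n l p
      = ∑ p ∈ range (2 * n), muB n l p + ∑ p ∈ range (2 * n), mP n (VB n l) p := by
    rw [← Finset.sum_add_distrib]; rfl
  rw [e3]
  have e4 : ∑ p ∈ range (2 * n), muB n l p = ∑ t ∈ range (2 * n), l (n - 1 + t) := by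
    rw [show ∑ p ∈ range (2 * n), muB n l p
        = ∑ t ∈ range (2 * n), ∑ p ∈ range (2 * n),
            (if p ≤ t then l (n - 1 + t) / (t + 1) else 0) from Finset.sum_comm]
    refine Finset.sum_congr rfl fun t ht => ?_
    rw [Finset.mem_range] at ht
    have hsub : range (t + 1) ⊆ range (2 * n) := by
      intro x hx; rw [Finset.mem_range] at *; omega
    calc (∑ p ∈ range (2 * n), if p ≤ t then l (n - 1 + t) / (t + 1) else 0)
        = ∑ p ∈ range (t + 1), (if p ≤ t then l (n - 1 + t) / (t + 1) else 0) :=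
          (Finset.sum_subset hsub (fun x _ hnx => by
            rw [Finset.mem_range] at hnx; rw [if_neg (by omega)])).symm
      _ = ∑ _p ∈ range (t + 1), l (n - 1 + t) / (t + 1) :=
          Finset.sum_congr rfl (fun p hp => if_pos (by rw [Finset.mem_range] at hp; omega))
      _ = (t + 1) * (l (n - 1 + t) / (t + 1)) := by
          rw [Finset.sum_const, Finset.card_range, smul_eq_mul]
      _ = l (n - 1 + t) := Nat.mul_div_cancel' (h2 t ht)
  have e5 : ∑ p ∈ range (2 * n), mP n (VB n l) p = ∑ i ∈ range (n - 1), l i := by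
    rw [show ∑ p ∈ range (2 * n), mP n (VB n l) p
        = ∑ i ∈ range (n - 1), ∑ p ∈ range (2 * n),
            (if VB n l i ∧ p < 2 * i + 2 then 1 else 0) from Finset.sum_comm]
    refine Finset.sum_congr rfl fun i hi => ?_
    rw [Finset.mem_range] at hi
    rcases h1 i hi with h0 | h0
    · have hz : (∑ p ∈ range (2 * n), if VB n l i ∧ p < 2 * i + 2 then 1 else 0) = 0 :=
        Finset.sum_eq_zero (fun p _ => if_neg (by rintro ⟨hv, -⟩; exact hv.2 h0))
      rw [hz, h0]
    · have hv : VB n l i := ⟨hi, by rw [h0]; omega⟩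
      have hsub : range (2 * i + 2) ⊆ range (2 * n) := by
        intro x hx; rw [Finset.mem_range] at *; omega
      calc (∑ p ∈ range (2 * n), if VB n l i ∧ p < 2 * i + 2 then 1 else 0)
          = ∑ p ∈ range (2 * i + 2), (if VB n l i ∧ p < 2 * i + 2 then 1 else 0) :=
            (Finset.sum_subset hsub (fun x _ hnx => by
              rw [Finset.mem_range] at hnx; rw [if_neg (by rintro ⟨-, h⟩; omega)])).symm
        _ = ∑ _p ∈ range (2 * i + 2), 1 :=
            Finset.sum_congr rfl (fun p hp =>
              if_pos ⟨hv, by rw [Finset.mem_range] at hp; omega⟩)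
        _ = 2 * i + 2 := by rw [Finset.sum_const, Finset.card_range, smul_eq_mul, mul_one]
        _ = l i := h0.symm
  rw [e4, e5, Finset.sum_range_add]
  omega


/-! ### The forward map and the two inverse identities -/

def Cond (n : ℕ) (ab : (ℕ → ℕ) × (ℕ → ℕ)) : Prop :=
  (∀ i, ab.1 (i + 1) ≤ ab.1 i) ∧ (∀ i, ab.2 (i + 1) ≤ ab.2 i) ∧
  (∀ i, ab.2 i ≤ ab.1 i) ∧ (∀ i, ab.1 (i + 2) ≤ ab.2 i) ∧
  (∀ i, n ≤ i → ab.1 i = 0) ∧ (∀ i, n ≤ i → ab.2 i = 0)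

abbrev VF (n : ℕ) (ab : (ℕ → ℕ) × (ℕ → ℕ)) : ℕ → Prop :=
  fun i => i < n - 1 ∧ ab.2 i < ab.1 (i + 1)

def cF (ab : (ℕ → ℕ) × (ℕ → ℕ)) (p : ℕ) : ℕ :=
  if p % 2 = 0 then ab.1 (p / 2) else ab.2 (p / 2)

def dF (n : ℕ) (ab : (ℕ → ℕ) × (ℕ → ℕ)) (p : ℕ) : ℕ := cF ab (tauP (VF n ab) p)

def phiFun (n : ℕ) (ab : (ℕ → ℕ) × (ℕ → ℕ)) (i : ℕ) : ℕ :=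
  if i < n - 1 then (if ab.2 i < ab.1 (i + 1) then 2 * i + 2 else 0)
  else if i < n - 1 + 2 * n then
    (i - (n - 1) + 1) *
      (dF n ab (i - (n - 1)) - (dF n ab (i - (n - 1) + 1) + dropP (VF n ab) (i - (n - 1))))
  else 0

noncomputable def Phi (n : ℕ) (ab : (ℕ → ℕ) × (ℕ → ℕ)) : ℕ →₀ ℕ :=
  Finsupp.onFinset (range (n - 1 + 2 * n)) (phiFun n ab)
    (fun i hi => by
      rw [Finset.mem_range]
      by_contra h
      push_neg at h
      exact hi (by rw [phiFun, if_neg (by omega), if_neg (by omega)]))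

variable {n : ℕ} {ab : (ℕ → ℕ) × (ℕ → ℕ)}

lemma cF_even (i : ℕ) : cF ab (2 * i) = ab.1 i := by
  rw [cF, if_pos (by omega), show 2 * i / 2 = i by omega]

lemma cF_odd (i : ℕ) : cF ab (2 * i + 1) = ab.2 i := by
  rw [cF, if_neg (by omega), show (2 * i + 1) / 2 = i by omega]

lemma dF_even (i : ℕ) :
    dF n ab (2 * i) = if 1 ≤ i ∧ VF n ab (i - 1) then ab.2 (i - 1) else ab.1 i := by
  rw [dF, tauP_even]
  split_ifs with h
  · rw [show 2 * i - 1 = 2 * (i - 1) + 1 by omega, cF_odd]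
  · rw [cF_even]

lemma dF_odd (i : ℕ) :
    dF n ab (2 * i + 1) = if VF n ab i then ab.1 (i + 1) else ab.2 i := by
  rw [dF, tauP_odd]
  split_ifs with h
  · rw [show 2 * i + 2 = 2 * (i + 1) by omega, cF_even]
  · rw [cF_odd]

lemma dF_step (hc : Cond n ab) (p : ℕ) :
    dF n ab (p + 1) + dropP (VF n ab) p ≤ dF n ab p := by
  obtain ⟨ha, hb, hba, hab2, ha0, hb0⟩ := hc
  rcases parity_cases p with ⟨i, rfl⟩ | ⟨i, rfl⟩
  · rw [dropP_even, add_zero, dF_even, show 2 * i + 1 = 2 * i + 1 from rfl, dF_odd]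
    split_ifs with h1 h2 h2
    · have := hab2 (i - 1); rw [show i - 1 + 2 = i + 1 by omega] at this; exact this
    · exact ha i
    · have := hb (i - 1); rw [show i - 1 + 1 = i by omega] at this; exact this
    · exact hba i
  · rw [dropP_odd, dF_odd, show 2 * i + 1 + 1 = 2 * (i + 1) by ring, dF_even]
    have e : i + 1 - 1 = i := rfl
    rw [e]
    split_ifs with h1 h2 h2
    · exact h2.2
    · exact absurd h1.2 h2
    · exact absurd ⟨by omega, h2⟩ h1
    · by_cases hn : i < n - 1
      · have : ¬ ab.2 i < ab.1 (i + 1) := fun hv => h2 ⟨hn, hv⟩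
        omega
      · rw [ha0 (i + 1) (by omega)]; omega

lemma dF_zero (hc : Cond n ab) {p : ℕ} (hp : 2 * n ≤ p) : dF n ab p = 0 := by
  obtain ⟨ha, hb, hba, hab2, ha0, hb0⟩ := hc
  rcases parity_cases p with ⟨i, rfl⟩ | ⟨i, rfl⟩
  · rw [dF_even, if_neg (fun h => by have := h.2.1; omega)]
    exact ha0 i (by omega)
  · rw [dF_odd, if_neg (fun h => by have := h.1; omega)]
    exact hb0 i (by omega)

lemma Phi_lt (i : ℕ) (hi : i < n - 1) :
    Phi n ab i = if ab.2 i < ab.1 (i + 1) then 2 * i + 2 else 0 := by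
  rw [Phi, Finsupp.onFinset_apply, phiFun, if_pos hi]

lemma Phi_mid (t : ℕ) (ht : t < 2 * n) :
    Phi n ab (n - 1 + t)
      = (t + 1) * (dF n ab t - (dF n ab (t + 1) + dropP (VF n ab) t)) := by
  rw [Phi, Finsupp.onFinset_apply, phiFun, if_neg (by omega), if_pos (by omega),
    show n - 1 + t - (n - 1) = t by omega]

lemma Phi_supp : (Phi n ab).support ⊆ range (n - 1 + 2 * n) :=
  Finsupp.support_onFinset_subset

lemma VB_Phi (i : ℕ) : VB n (Phi n ab) i ↔ VF n ab i := by
  constructor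
  · rintro ⟨hi, hne⟩
    refine ⟨hi, ?_⟩
    rw [Phi_lt i hi] at hne
    by_contra h
    rw [if_neg h] at hne
    exact hne rfl
  · rintro ⟨hi, hv⟩
    exact ⟨hi, by rw [Phi_lt i hi, if_pos hv]; omega⟩

lemma muB_mP_Phi (hc : Cond n ab) (p : ℕ) :
    muB n (Phi n ab) p + mP n (VF n ab) p = dF n ab p := by
  have key : ∀ j, muB n (Phi n ab) (2 * n - j) + mP n (VF n ab) (2 * n - j)
      = dF n ab (2 * n - j) := by
    intro j
    induction j with
    | zero =>
      rw [Nat.sub_zero, muB_zero n _ le_rfl, mP_zero n le_rfl, dF_zero hc le_rfl]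
    | succ j ih =>
      by_cases hj : j < 2 * n
      · have hpe : 2 * n - (j + 1) + 1 = 2 * n - j := by omega
        have hplt : 2 * n - (j + 1) < 2 * n := by omega
        set pp := 2 * n - (j + 1) with hpp
        rw [← hpe] at ih
        have e1 := muB_succ n (Phi n ab) pp
        rw [if_pos hplt] at e1
        have e2 := mP_succ (V := VF n ab) n (fun i hi => hi.1) pp
        have hq : Phi n ab (n - 1 + pp) / (pp + 1)
            = dF n ab pp - (dF n ab (pp + 1) + dropP (VF n ab) pp) := by
          rw [Phi_mid pp hplt, Nat.mul_div_cancel_left _ (by omega)]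
        rw [hq] at e1
        have hstep := dF_step hc pp
        omega
      · rw [show 2 * n - (j + 1) = 2 * n - j by omega]
        exact ih
  by_cases hp : p ≤ 2 * n
  · have := key (2 * n - p)
    rwa [show 2 * n - (2 * n - p) = p by omega] at this
  · rw [muB_zero n _ (by omega), mP_zero n (by omega), dF_zero hc (by omega)]

lemma dB_Phi (hc : Cond n ab) (p : ℕ) : dB n (Phi n ab) p = dF n ab p := by
  rw [dB, mP_congr n (fun i => VB_Phi i) p, muB_mP_Phi hc p]

lemma AB_Phi (hc : Cond n ab) : AB n (Phi n ab) = ab := by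
  refine Prod.ext ?_ ?_
  · funext i
    show dB n (Phi n ab) (tauP (VB n (Phi n ab)) (2 * i)) = ab.1 i
    rw [tauP_congr (fun j => VB_Phi j) (2 * i), dB_Phi hc, dF, tauP_invol, cF_even]
  · funext i
    show dB n (Phi n ab) (tauP (VB n (Phi n ab)) (2 * i + 1)) = ab.2 i
    rw [tauP_congr (fun j => VB_Phi j) (2 * i + 1), dB_Phi hc, dF, tauP_invol, cF_odd]

/-! ### The other inverse identity -/

variable {l : ℕ →₀ ℕ}

lemma viol_AB (i : ℕ) (hi : i < n - 1) :
    ((AB n l).2 i < (AB n l).1 (i + 1)) ↔ l i ≠ 0 := by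
  show dB n l (tauP (VB n l) (2 * i + 1)) < dB n l (tauP (VB n l) (2 * (i + 1))) ↔ _
  rw [tauP_odd, tauP_even]
  have e : i + 1 - 1 = i := rfl
  rw [e]
  constructor
  · intro h
    by_contra h0
    have hnv : ¬ VB n l i := fun hv => hv.2 h0
    rw [if_neg hnv, if_neg (fun hc => hnv hc.2)] at h
    exact absurd h (not_lt.2 (dB_anti n l (by omega)))
  · intro hne
    have hv : VB n l i := ⟨hi, hne⟩
    rw [if_pos hv, if_pos ⟨by omega, hv⟩]
    have hstep := dB_step n l (2 * i + 1)
    rw [dropP_odd, if_pos hv, show 2 * i + 1 + 1 = 2 * i + 2 by omega] at hstep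
    rw [show 2 * (i + 1) - 1 = 2 * i + 1 by omega]
    omega

lemma VF_AB (i : ℕ) : VF n (AB n l) i ↔ VB n l i :=
  ⟨fun h => ⟨h.1, (viol_AB i h.1).1 h.2⟩, fun h => ⟨h.1, (viol_AB i h.1).2 h.2⟩⟩

lemma dF_AB (p : ℕ) : dF n (AB n l) p = dB n l p := by
  rw [dF, tauP_congr (fun i => VF_AB i) p]
  have hc : ∀ q, cF (AB n l) q = dB n l (tauP (VB n l) q) := by
    intro q
    rcases parity_cases q with ⟨i, rfl⟩ | ⟨i, rfl⟩
    · rw [cF_even]; rfl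
    · rw [cF_odd]; rfl
  rw [hc, tauP_invol]

lemma Phi_AB (h1 : ∀ i, i < n - 1 → l i = 0 ∨ l i = 2 * i + 2)
    (h2 : ∀ t, t < 2 * n → (t + 1) ∣ l (n - 1 + t))
    (hs0 : ∀ i, n - 1 + 2 * n ≤ i → l i = 0) :
    Phi n (AB n l) = l := by
  ext i
  by_cases hi : i < n - 1
  · rw [Phi_lt i hi]
    rcases h1 i hi with h0 | h0
    · rw [if_neg (fun hv => ((viol_AB i hi).1 hv) h0), h0]
    · rw [if_pos ((viol_AB i hi).2 (by rw [h0]; omega)), h0]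
  · by_cases hK : i < n - 1 + 2 * n
    · have hit : i = n - 1 + (i - (n - 1)) := by omega
      have htn : i - (n - 1) < 2 * n := by omega
      set t := i - (n - 1) with htd
      rw [hit, Phi_mid t htn, dF_AB, dF_AB, dropP_congr (fun j => VF_AB j) t]
      have e1 := muB_succ n l t
      rw [if_pos htn] at e1
      have e2 := mP_succ (V := VB n l) n (fun j hj => hj.1) t
      have heq : dB n l t - (dB n l (t + 1) + dropP (VB n l) t)
          = l (n - 1 + t) / (t + 1) := by
        have d1 : dB n l t = muB n l t + mP n (VB n l) t := rfl
        have d2 : dB n l (t + 1) = muB n l (t + 1) + mP n (VB n l) (t + 1) := rfl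
        generalize hg : l (n - 1 + t) / (t + 1) = q at e1 ⊢
        omega
      rw [heq, Nat.mul_div_cancel' (h2 t htn)]
    · have : Phi n (AB n l) i = 0 := by
        rw [Phi, Finsupp.onFinset_apply, phiFun, if_neg hi, if_neg hK]
      rw [this, hs0 i (by omega)]


/-! ### Power series lemmas -/

abbrev DD (n i x : ℕ) : Prop :=
  (i < n - 1 ∧ (x = 0 ∨ x = 2 * i + 2)) ∨ (¬ i < n - 1 ∧ (i - (n - 1) + 1) ∣ x)

def FF (n i : ℕ) : PowerSeries ℚ :=
  PowerSeries.mk (fun N => if DD n i N then 1 else 0)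

lemma geom_series (m : ℕ) (hm : 0 < m) :
    (PowerSeries.mk fun N => if m ∣ N then (1 : ℚ) else 0) * (1 - X ^ m) = 1 := by
  ext N
  rw [mul_sub, mul_one, map_sub, coeff_mul_X_pow', coeff_mk, coeff_one]
  by_cases h0 : N = 0
  · subst h0
    rw [if_pos (dvd_zero m), if_neg (by omega), if_pos rfl, sub_zero]
  · rw [if_neg h0]
    by_cases hdvd : m ∣ N
    · have hmN : m ≤ N := Nat.le_of_dvd (Nat.pos_of_ne_zero h0) hdvd
      rw [if_pos hdvd, if_pos hmN, coeff_mk, if_pos (Nat.dvd_sub hdvd dvd_rfl), sub_self]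
    · rw [if_neg hdvd]
      by_cases hmN : m ≤ N
      · rw [if_pos hmN, coeff_mk,
          if_neg (fun hd => hdvd (by
            have := Nat.sub_add_cancel hmN
            calc m ∣ N - m + m := dvd_add hd dvd_rfl
            _ = N := this)), sub_zero]
      · rw [if_neg hmN, sub_zero]

lemma const_prod (n : ℕ) :
    constantCoeff (R := ℚ) (∏ j ∈ range (2 * n), (1 - X ^ (j + 1))) ≠ 0 := by
  rw [map_prod]
  have : ∀ j ∈ range (2 * n), constantCoeff (R := ℚ) (1 - X ^ (j + 1)) = 1 := by
    intro j _
    rw [map_sub, map_one, map_pow, constantCoeff_X, zero_pow (by omega), sub_zero]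
  rw [Finset.prod_congr rfl this, Finset.prod_const_one]
  exact one_ne_zero

lemma prod_inv (n : ℕ) :
    (∏ j ∈ range (2 * n), (1 - X ^ (j + 1) : PowerSeries ℚ))⁻¹
      = ∏ j ∈ range (2 * n), PowerSeries.mk (fun N => if (j + 1) ∣ N then (1 : ℚ) else 0) := by
  rw [PowerSeries.inv_eq_iff_mul_eq_one (const_prod n), ← Finset.prod_mul_distrib]
  exact Finset.prod_eq_one (fun j _ => geom_series (j + 1) (by omega))

lemma binom_series (m : ℕ) (hm : m ≠ 0) :
    (1 + X ^ m : PowerSeries ℚ) = PowerSeries.mk (fun N => if N = 0 ∨ N = m then 1 else 0) := by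
  ext N
  rw [map_add, coeff_one, coeff_X_pow, coeff_mk]
  by_cases h0 : N = 0
  · subst h0
    rw [if_pos rfl, if_neg (fun h => hm h.symm), if_pos (Or.inl rfl), add_zero]
  · rw [if_neg h0]
    by_cases hNm : N = m
    · rw [if_pos hNm, if_pos (Or.inr hNm), zero_add]
    · rw [if_neg hNm, if_neg (by tauto), add_zero]

lemma rhs_eq (n : ℕ) :
    (∏ j ∈ range (n - 1), (1 + (X : PowerSeries ℚ) ^ (2 * j + 2))) *
        (∏ j ∈ range (2 * n), (1 - (X : PowerSeries ℚ) ^ (j + 1)))⁻¹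
      = ∏ i ∈ range (n - 1 + 2 * n), FF n i := by
  rw [prod_inv n, Finset.prod_range_add]
  congr 1
  · refine Finset.prod_congr rfl fun j hj => ?_
    rw [Finset.mem_range] at hj
    rw [binom_series (2 * j + 2) (by omega)]
    refine congrArg _ (funext fun N => ?_)
    refine (if_congr ?_ rfl rfl)
    constructor
    · intro h; exact Or.inl ⟨hj, h⟩
    · rintro (⟨-, h⟩ | ⟨h, -⟩)
      · exact h
      · exact absurd hj h
  · refine Finset.prod_congr rfl fun j _ => ?_
    refine congrArg _ (funext fun N => ?_)
    refine (if_congr ?_ rfl rfl)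
    constructor
    · intro h
      exact Or.inr ⟨by omega, by rwa [show n - 1 + j - (n - 1) + 1 = j + 1 by omega]⟩
    · rintro (⟨h, -⟩ | ⟨-, h⟩)
      · omega
      · rwa [show n - 1 + j - (n - 1) + 1 = j + 1 by omega] at h

lemma coeff_FF_prod (n N : ℕ) :
    (PowerSeries.coeff (R := ℚ) N) (∏ i ∈ range (n - 1 + 2 * n), FF n i)
      = (((finsuppAntidiag (range (n - 1 + 2 * n)) N).filter
          (fun l : ℕ →₀ ℕ => ∀ i ∈ range (n - 1 + 2 * n), DD n i (l i))).card : ℚ) := by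
  rw [PowerSeries.coeff_prod]
  have e : ∀ l ∈ finsuppAntidiag (range (n - 1 + 2 * n)) N,
      (∏ i ∈ range (n - 1 + 2 * n), PowerSeries.coeff (R := ℚ) (l i) (FF n i))
        = if (∀ i ∈ range (n - 1 + 2 * n), DD n i (l i)) then (1 : ℚ) else 0 := by
    intro l _
    simp only [FF, coeff_mk]
    rw [Finset.prod_boole]
  rw [Finset.sum_congr rfl e, Finset.sum_boole]


/-! ### Counting -/

lemma Phi_h1 {n : ℕ} {ab : (ℕ → ℕ) × (ℕ → ℕ)} :
    ∀ i, i < n - 1 → Phi n ab i = 0 ∨ Phi n ab i = 2 * i + 2 := by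
  intro i hi
  rw [Phi_lt i hi]
  split_ifs
  · exact Or.inr rfl
  · exact Or.inl rfl

lemma Phi_h2 {n : ℕ} {ab : (ℕ → ℕ) × (ℕ → ℕ)} :
    ∀ t, t < 2 * n → (t + 1) ∣ Phi n ab (n - 1 + t) := by
  intro t ht
  rw [Phi_mid t ht]
  exact dvd_mul_right _ _

lemma card_eq (n N : ℕ) :
    {ab : (ℕ → ℕ) × (ℕ → ℕ) |
        (∀ i, ab.1 (i + 1) ≤ ab.1 i) ∧ (∀ i, ab.2 (i + 1) ≤ ab.2 i) ∧
        (∀ i, ab.2 i ≤ ab.1 i) ∧ (∀ i, ab.1 (i + 2) ≤ ab.2 i) ∧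
        (∀ i, n ≤ i → ab.1 i = 0) ∧ (∀ i, n ≤ i → ab.2 i = 0) ∧
        (∑ i ∈ Finset.range n, (ab.1 i + ab.2 i)) = N}.ncard
      = ((finsuppAntidiag (range (n - 1 + 2 * n)) N).filter
          (fun l : ℕ →₀ ℕ => ∀ i ∈ range (n - 1 + 2 * n), DD n i (l i))).card := by
  set s := (finsuppAntidiag (range (n - 1 + 2 * n)) N).filter
      (fun l : ℕ →₀ ℕ => ∀ i ∈ range (n - 1 + 2 * n), DD n i (l i)) with hs
  rw [← Nat.card_coe_set_eq, ← Set.ncard_coe_finset s, ← Nat.card_coe_set_eq]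
  apply Nat.card_congr
  have hmem : ∀ l : ℕ →₀ ℕ, l ∈ s ↔
      ((∑ i ∈ range (n - 1 + 2 * n), l i) = N ∧ l.support ⊆ range (n - 1 + 2 * n)) ∧
        (∀ i ∈ range (n - 1 + 2 * n), DD n i (l i)) := by
    intro l
    rw [hs, Finset.mem_filter, Finset.mem_finsuppAntidiag]
  -- helpers extracting h1, h2, hs0 from membership
  have get_h1 : ∀ l : ℕ →₀ ℕ, l ∈ s → ∀ i, i < n - 1 → l i = 0 ∨ l i = 2 * i + 2 := by
    intro l hl i hi
    rcases ((hmem l).1 hl).2 i (Finset.mem_range.2 (by omega)) with h | h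
    · exact h.2
    · exact absurd hi h.1
  have get_h2 : ∀ l : ℕ →₀ ℕ, l ∈ s → ∀ t, t < 2 * n → (t + 1) ∣ l (n - 1 + t) := by
    intro l hl t ht
    rcases ((hmem l).1 hl).2 (n - 1 + t) (Finset.mem_range.2 (by omega)) with h | h
    · exact absurd h.1 (by omega)
    · have h2 := h.2
      rwa [show n - 1 + t - (n - 1) + 1 = t + 1 by omega] at h2
  have get_hs0 : ∀ l : ℕ →₀ ℕ, l ∈ s → ∀ i, n - 1 + 2 * n ≤ i → l i = 0 := by
    intro l hl i hi
    by_contra h0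
    have := ((hmem l).1 hl).1.2 (Finsupp.mem_support_iff.2 h0)
    rw [Finset.mem_range] at this
    omega
  refine ⟨fun x => ⟨Phi n x.1, ?_⟩, fun y => ⟨AB n y.1, ?_⟩, ?_, ?_⟩
  · obtain ⟨ha, hb, hba, hab2, ha0, hb0, hsum⟩ := x.2
    have hc : Cond n x.1 := ⟨ha, hb, hba, hab2, ha0, hb0⟩
    rw [Finset.mem_coe, hmem]
    refine ⟨⟨?_, Phi_supp (n := n) (ab := x.1)⟩, ?_⟩
    · rw [← sum_AB n (Phi n x.1) Phi_h1 Phi_h2, AB_Phi hc]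
      exact hsum
    · intro i hi
      rw [Finset.mem_range] at hi
      by_cases hlt : i < n - 1
      · exact Or.inl ⟨hlt, Phi_h1 i hlt⟩
      · refine Or.inr ⟨hlt, ?_⟩
        have := Phi_h2 (n := n) (ab := x.1) (i - (n - 1)) (by omega)
        rw [show n - 1 + (i - (n - 1)) = i by omega] at this
        rwa [show i - (n - 1) + 1 = i - (n - 1) + 1 from rfl]
  · have hy := Finset.mem_coe.1 y.2
    refine ⟨AB_a_anti n y.1, AB_b_anti n y.1, AB_ba n y.1, AB_ab n y.1,
      AB_a_supp n y.1, AB_b_supp n y.1, ?_⟩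
    rw [sum_AB n y.1 (get_h1 y.1 hy) (get_h2 y.1 hy)]
    exact ((hmem y.1).1 hy).1.1
  · intro x
    apply Subtype.ext
    obtain ⟨ha, hb, hba, hab2, ha0, hb0, -⟩ := x.2
    exact AB_Phi ⟨ha, hb, hba, hab2, ha0, hb0⟩
  · intro y
    apply Subtype.ext
    have hy := Finset.mem_coe.1 y.2
    exact Phi_AB (get_h1 y.1 hy) (get_h2 y.1 hy) (get_hs0 y.1 hy)

end Stmt4Aux

open Finset

/-- The generating function for cylindric partitions with profile `(2,0)` with at most `n`
parts in each row equals `(-q²;q²)_{n-1} / (q;q)_{2n}` for `n ≥ 1`.  A cylindric partition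
with profile `(2,0)` is a pair of weakly decreasing sequences `a, b` of nonnegative
integers, supported on the first `n` indices, with `a i ≥ b i` and `b i ≥ a (i+2)`. -/
theorem stmt4 (n : ℕ) (hn : 1 ≤ n) :
    (PowerSeries.mk fun N : ℕ =>
        (Set.ncard {ab : (ℕ → ℕ) × (ℕ → ℕ) |
            (∀ i, ab.1 (i + 1) ≤ ab.1 i) ∧ (∀ i, ab.2 (i + 1) ≤ ab.2 i) ∧
            (∀ i, ab.2 i ≤ ab.1 i) ∧ (∀ i, ab.1 (i + 2) ≤ ab.2 i) ∧
            (∀ i, n ≤ i → ab.1 i = 0) ∧ (∀ i, n ≤ i → ab.2 i = 0) ∧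
            (∑ i ∈ Finset.range n, (ab.1 i + ab.2 i)) = N} : ℚ)) =
      (∏ j ∈ Finset.range (n - 1), (1 + (PowerSeries.X : PowerSeries ℚ) ^ (2 * j + 2))) *
        (∏ j ∈ Finset.range (2 * n), (1 - (PowerSeries.X : PowerSeries ℚ) ^ (j + 1)))⁻¹ := by
  rw [Stmt4Aux.rhs_eq n]
  apply PowerSeries.ext
  intro N
  rw [PowerSeries.coeff_mk, Stmt4Aux.coeff_FF_prod n N, Stmt4Aux.card_eq n N]
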